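/- arXiv:1908.03703 — 2 statements merged into one kernel-verified Lean document; each statement's English description precedes it below -/
import Mathlib

section
/- Let V = F_4^5 with primitive element α of F_4, and let P = ⟨x_1,...,x_5⟩ be a simplex point with x_i = 0. If a simplex point Q = ⟨y_1,...,y_5⟩ is adjacent to P (the span of P and Q is a simplex line), then Σ_{j≠i} x_j^{-1} y_j = 0. Conversely, a simplex point Q = ⟨y_1,...,y_5⟩ is adjacent to P if and only if y_i ≠ 0 and Σ_{j≠i} x_j^{-1} y_j = 0. -/
/-- A vector of `F^n` is *simplex* if exactly one of its coordinates is zero. -/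
def SimplexVec {F : Type*} [Field F] [DecidableEq F] {n : ℕ} (x : Fin n → F) : Prop :=
  (Finset.univ.filter (fun i => x i = 0)).card = 1

/-- A *simplex point* is a 1-dimensional subspace spanned by a simplex vector. -/
def SimplexPoint {F : Type*} [Field F] [DecidableEq F] {n : ℕ}
    (P : Submodule F (Fin n → F)) : Prop :=
  ∃ x : Fin n → F, SimplexVec x ∧ P = Submodule.span F {x}

/-- A *simplex line* is a 2-dimensional subspace all of whose nonzero vectors
are simplex. -/
def SimplexLine {F : Type*} [Field F] [DecidableEq F] {n : ℕ}
    (L : Submodule F (Fin n → F)) : Prop :=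
  Module.finrank F ↥L = 2 ∧ ∀ x ∈ L, x ≠ 0 → SimplexVec x

section Aux

variable {F : Type*} [Field F] [DecidableEq F] {n : ℕ}

lemma simplexVec_filter_eq {x : Fin n → F} (hx : SimplexVec x) {i : Fin n}
    (hxi : x i = 0) : Finset.univ.filter (fun j => x j = 0) = {i} := by
  obtain ⟨a, ha⟩ := Finset.card_eq_one.mp hx
  have hi : i ∈ Finset.univ.filter (fun j => x j = 0) := by simp [hxi]
  rw [ha] at hi
  simp only [Finset.mem_singleton] at hi
  rw [ha, hi]

lemma simplexVec_ne_zero {x : Fin n → F} (hx : SimplexVec x) {i : Fin n}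
    (hxi : x i = 0) {j : Fin n} (hj : j ≠ i) : x j ≠ 0 := by
  intro h
  have hf := simplexVec_filter_eq hx hxi
  have hj' : j ∈ Finset.univ.filter (fun j => x j = 0) := by simp [h]
  rw [hf] at hj'
  simp only [Finset.mem_singleton] at hj'
  exact hj hj'

lemma simplexVec_smul {x : Fin n → F} (hx : SimplexVec x) {a : F} (ha : a ≠ 0) :
    SimplexVec (a • x) := by
  have h : Finset.univ.filter (fun j => (a • x) j = 0)
      = Finset.univ.filter (fun j => x j = 0) := by
    ext j; simp [ha]
  unfold SimplexVec at hx ⊢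
  rw [h]; exact hx

end Aux

/-- Adjacency criterion for simplex points of `F_4^5`: if `P = ⟨x⟩` with
`x i = 0` and `Q = ⟨y⟩` is adjacent to `P`, then `∑_{j ≠ i} x_j⁻¹ y_j = 0`;
moreover `Q` is adjacent to `P` iff `y i ≠ 0` and `∑_{j ≠ i} x_j⁻¹ y_j = 0`. -/
theorem adjacency_criterion_F4
    (F : Type*) [Field F] [Fintype F] [DecidableEq F] (hF : Fintype.card F = 4)
    (x y : Fin 5 → F) (hx : SimplexVec x) (hy : SimplexVec y)
    (i : Fin 5) (hxi : x i = 0) :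
    ((Submodule.span F {x} ≠ Submodule.span F {y} ∧
        SimplexLine (Submodule.span F {x} ⊔ Submodule.span F {y})) →
      ∑ j ∈ Finset.univ.erase i, (x j)⁻¹ * y j = 0) ∧
    ((Submodule.span F {x} ≠ Submodule.span F {y} ∧
        SimplexLine (Submodule.span F {x} ⊔ Submodule.span F {y})) ↔
      (y i ≠ 0 ∧ ∑ j ∈ Finset.univ.erase i, (x j)⁻¹ * y j = 0)) := by
  classical
  have h4 : ((4 : ℕ) : F) = 0 := by rw [← hF]; exact FiniteField.cast_card_eq_zero F
  have h2 : (2 : F) = 0 := by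
    have h : (2 : F) * 2 = 0 := by push_cast at h4; linear_combination h4
    rcases mul_eq_zero.mp h with h' | h' <;> exact h'
  have hxne : ∀ j : Fin 5, j ≠ i → x j ≠ 0 := fun j hj => simplexVec_ne_zero hx hxi hj
  have hsp : Submodule.span F {x} ⊔ Submodule.span F {y}
      = Submodule.span F ({x, y} : Set (Fin 5 → F)) := by
    rw [← Submodule.span_union, Set.singleton_union]
  have hmem : ∀ a b : F, a • x + b • y ∈ Submodule.span F ({x, y} : Set (Fin 5 → F)) :=
    fun a b => Submodule.mem_span_pair.mpr ⟨a, b, rfl⟩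
  have key : ∀ (c : F) (j : Fin 5), j ≠ i → ((c • x + y) j = 0 ↔ (x j)⁻¹ * y j = c) := by
    intro c j hj
    have hxj := hxne j hj
    simp only [Pi.add_apply, Pi.smul_apply, smul_eq_mul]
    rw [inv_mul_eq_iff_eq_mul₀ hxj]
    constructor
    · intro h
      linear_combination h - x j * c * h2
    · intro h
      linear_combination h + x j * c * h2
  -- Forward direction
  have forward : (Submodule.span F {x} ≠ Submodule.span F {y} ∧
      SimplexLine (Submodule.span F {x} ⊔ Submodule.span F {y})) →
      y i ≠ 0 ∧ ∑ j ∈ Finset.univ.erase i, (x j)⁻¹ * y j = 0 := by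
    rintro ⟨hne, hrank, hall⟩
    rw [hsp] at hall
    have hyi : y i ≠ 0 := by
      intro hyi0
      obtain ⟨j₀, hj₀⟩ := exists_ne i
      have hyj₀ : y j₀ ≠ 0 := simplexVec_ne_zero hy hyi0 hj₀
      have hbne : x j₀ * (y j₀)⁻¹ ≠ 0 := mul_ne_zero (hxne j₀ hj₀) (inv_ne_zero hyj₀)
      have hvmem : x + (x j₀ * (y j₀)⁻¹) • y ∈ Submodule.span F ({x, y} : Set (Fin 5 → F)) := by
        have h := hmem 1 (x j₀ * (y j₀)⁻¹); rwa [one_smul] at h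
      have hvne : x + (x j₀ * (y j₀)⁻¹) • y ≠ 0 := by
        intro h0
        apply hne
        have hxeq : x = (-(x j₀ * (y j₀)⁻¹)) • y := by
          rw [neg_smul]
          exact eq_neg_of_add_eq_zero_left h0
        rw [hxeq]
        exact Submodule.span_singleton_smul_eq
          (isUnit_iff_ne_zero.mpr (neg_ne_zero.mpr hbne)) y
      have hvsimp := hall _ hvmem hvne
      have hvi : (x + (x j₀ * (y j₀)⁻¹) • y) i = 0 := by
        simp [hxi, hyi0]
      have hvj₀ : (x + (x j₀ * (y j₀)⁻¹) • y) j₀ = 0 := by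
        simp only [Pi.add_apply, Pi.smul_apply, smul_eq_mul]
        rw [mul_assoc, inv_mul_cancel₀ hyj₀, mul_one, ← two_mul, h2, zero_mul]
      exact simplexVec_ne_zero hvsimp hvi hj₀ hvj₀
    refine ⟨hyi, ?_⟩
    have fib : ∀ c : F, (Finset.univ.erase i).filter (fun j => (x j)⁻¹ * y j = c) =
        Finset.univ.filter (fun j => (c • x + y) j = 0) := by
      intro c
      ext j
      simp only [Finset.mem_filter, Finset.mem_erase, Finset.mem_univ, true_and, and_true]
      constructor
      · rintro ⟨hj, hs⟩
        exact (key c j hj).mpr hs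
      · intro h0
        have hj : j ≠ i := by
          rintro rfl
          have h' : (c • x + y) j = y j := by simp [hxi]
          rw [h'] at h0
          exact hyi h0
        exact ⟨hj, (key c j hj).mp h0⟩
    have fibcard : ∀ c : F, (Finset.univ.filter (fun j => (c • x + y) j = 0)).card = 1 := by
      intro c
      have hvne : c • x + y ≠ 0 := by
        intro h0
        have h' : (c • x + y) i = 0 := by rw [h0]; rfl
        simp only [Pi.add_apply, Pi.smul_apply, smul_eq_mul, hxi, mul_zero, zero_add] at h'
        exact hyi h'
      have hvmem : c • x + y ∈ Submodule.span F ({x, y} : Set (Fin 5 → F)) := by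
        have h := hmem c 1; rwa [one_smul] at h
      exact hall _ hvmem hvne
    calc ∑ j ∈ Finset.univ.erase i, (x j)⁻¹ * y j
        = ∑ c : F, ∑ j ∈ (Finset.univ.erase i).filter (fun j => (x j)⁻¹ * y j = c),
            (x j)⁻¹ * y j := (Finset.sum_fiberwise _ _ _).symm
      _ = ∑ c : F, c := by
          apply Finset.sum_congr rfl
          intro c _
          have h1 : ((Finset.univ.erase i).filter
              (fun j => (x j)⁻¹ * y j = c)).card = 1 := by
            rw [fib c]; exact fibcard c
          obtain ⟨j₀, hj₀⟩ := Finset.card_eq_one.mp h1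
          rw [hj₀, Finset.sum_singleton]
          have hmem' : j₀ ∈ (Finset.univ.erase i).filter
              (fun j => (x j)⁻¹ * y j = c) := by
            rw [hj₀]; exact Finset.mem_singleton_self j₀
          exact (Finset.mem_filter.mp hmem').2
      _ = ∑ c : F, c ^ 1 := by simp
      _ = 0 := FiniteField.sum_pow_lt_card_sub_one F 1 (by rw [hF]; norm_num)
  -- Backward direction
  have backward : y i ≠ 0 → (∑ j ∈ Finset.univ.erase i, (x j)⁻¹ * y j = 0) →
      (Submodule.span F {x} ≠ Submodule.span F {y} ∧
        SimplexLine (Submodule.span F {x} ⊔ Submodule.span F {y})) := by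
    intro hyi hsum
    obtain ⟨k, hk⟩ := Finset.card_eq_one.mp hy
    have hyk : y k = 0 := by
      have h : k ∈ Finset.univ.filter (fun j => y j = 0) := by
        rw [hk]; exact Finset.mem_singleton_self k
      exact (Finset.mem_filter.mp h).2
    have hki : k ≠ i := fun h => hyi (h ▸ hyk)
    have hyj : ∀ j : Fin 5, j ≠ k → y j ≠ 0 := fun j hj => simplexVec_ne_zero hy hyk hj
    have hs0 : ∀ j : Fin 5, j ≠ i → ((x j)⁻¹ * y j = 0 ↔ j = k) := by
      intro j hj
      constructor
      · intro h
        by_contra hjk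
        rcases mul_eq_zero.mp h with h' | h'
        · exact hxne j hj (inv_eq_zero.mp h')
        · exact hyj j hjk h'
      · intro h; rw [h, hyk, mul_zero]
    have hinj : Set.InjOn (fun j => (x j)⁻¹ * y j)
        ((Finset.univ.erase i : Finset (Fin 5)) : Set (Fin 5)) := by
      intro j₁ hj₁ j₂ hj₂ heq
      simp only [Set.mem_setOf_eq, Finset.coe_erase, Set.mem_diff, Set.mem_singleton_iff,
        Finset.coe_univ, Set.mem_univ, true_and] at hj₁ hj₂
      simp only at heq
      by_contra hne12
      by_cases hz : (x j₁)⁻¹ * y j₁ = 0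
      · exact hne12 (((hs0 j₁ hj₁).mp hz).trans ((hs0 j₂ hj₂).mp (heq ▸ hz)).symm)
      · have hj₁k : j₁ ≠ k := fun h => hz ((hs0 j₁ hj₁).mpr h)
        have hj₂k : j₂ ≠ k := fun h => hz (heq.symm ▸ (hs0 j₂ hj₂).mpr h)
        have hm1 : j₁ ∈ Finset.univ.erase i := Finset.mem_erase.mpr ⟨hj₁, Finset.mem_univ _⟩
        have hm2 : j₂ ∈ (Finset.univ.erase i).erase j₁ :=
          Finset.mem_erase.mpr ⟨Ne.symm hne12, Finset.mem_erase.mpr ⟨hj₂, Finset.mem_univ _⟩⟩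
        have hm3 : k ∈ ((Finset.univ.erase i).erase j₁).erase j₂ :=
          Finset.mem_erase.mpr ⟨Ne.symm hj₂k, Finset.mem_erase.mpr
            ⟨Ne.symm hj₁k, Finset.mem_erase.mpr ⟨hki, Finset.mem_univ _⟩⟩⟩
        have hcard : ((((Finset.univ.erase i).erase j₁).erase j₂).erase k).card = 1 := by
          rw [Finset.card_erase_of_mem hm3, Finset.card_erase_of_mem hm2,
            Finset.card_erase_of_mem hm1, Finset.card_erase_of_mem (Finset.mem_univ i)]
          simp
        obtain ⟨j₃, hj₃⟩ := Finset.card_eq_one.mp hcard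
        have hj₃mem : j₃ ∈ (((Finset.univ.erase i).erase j₁).erase j₂).erase k := by
          rw [hj₃]; exact Finset.mem_singleton_self j₃
        have hj₃k : j₃ ≠ k := (Finset.mem_erase.mp hj₃mem).1
        have hj₃i : j₃ ≠ i :=
          (Finset.mem_erase.mp (Finset.mem_erase.mp (Finset.mem_erase.mp
            (Finset.mem_erase.mp hj₃mem).2).2).2).1
        have hsum1 : ∑ j ∈ Finset.univ.erase i, (x j)⁻¹ * y j
            = (x j₁)⁻¹ * y j₁ + ((x j₂)⁻¹ * y j₂ + ((x k)⁻¹ * y k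
              + (x j₃)⁻¹ * y j₃)) := by
          rw [← Finset.add_sum_erase _ _ hm1, ← Finset.add_sum_erase _ _ hm2,
            ← Finset.add_sum_erase _ _ hm3, hj₃, Finset.sum_singleton]
        have hk0 : (x k)⁻¹ * y k = 0 := by rw [hyk, mul_zero]
        have hj₃0 : (x j₃)⁻¹ * y j₃ = 0 := by
          linear_combination hsum - hsum1 - heq - hk0 - ((x j₂)⁻¹ * y j₂) * h2
        exact hj₃k ((hs0 j₃ hj₃i).mp hj₃0)
    have himg : Finset.image (fun j => (x j)⁻¹ * y j) (Finset.univ.erase i)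
        = Finset.univ := by
      apply Finset.eq_univ_of_card
      rw [Finset.card_image_of_injOn hinj, Finset.card_erase_of_mem (Finset.mem_univ i), hF]
      simp
    have hexu : ∀ c : F, ∃! j, j ∈ Finset.univ.erase i ∧ (x j)⁻¹ * y j = c := by
      intro c
      have hc : c ∈ Finset.image (fun j => (x j)⁻¹ * y j) (Finset.univ.erase i) := by
        rw [himg]; exact Finset.mem_univ c
      obtain ⟨j, hj, hjc⟩ := Finset.mem_image.mp hc
      refine ⟨j, ⟨hj, hjc⟩, ?_⟩
      rintro j' ⟨hj', hj'c⟩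
      exact hinj (Finset.mem_coe.mpr hj') (Finset.mem_coe.mpr hj)
        (by show (x j')⁻¹ * y j' = (x j)⁻¹ * y j; rw [hj'c, hjc])
    have hxy_ne : Submodule.span F {x} ≠ Submodule.span F {y} := by
      intro h
      have hym : y ∈ Submodule.span F {x} := h ▸ Submodule.mem_span_singleton_self y
      obtain ⟨a, ha⟩ := Submodule.mem_span_singleton.mp hym
      apply hyi
      rw [← ha]
      simp [hxi]
    refine ⟨hxy_ne, ?_, ?_⟩
    · -- finrank = 2
      have hli : LinearIndependent F ![x, y] := by
        rw [LinearIndependent.pair_iff]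
        intro a b hab
        have hb : b = 0 := by
          have h := congrFun hab i
          simp only [Pi.add_apply, Pi.smul_apply, smul_eq_mul, hxi, mul_zero, zero_add,
            Pi.zero_apply] at h
          exact (mul_eq_zero.mp h).resolve_right hyi
        subst hb
        have ha : a = 0 := by
          have h := congrFun hab k
          simp only [Pi.add_apply, Pi.smul_apply, smul_eq_mul, zero_mul, add_zero,
            Pi.zero_apply] at h
          exact (mul_eq_zero.mp h).resolve_right (hxne k hki)
        exact ⟨ha, rfl⟩
      have hrange : Set.range ![x, y] = ({x, y} : Set (Fin 5 → F)) := by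
        ext v
        simp only [Set.mem_range, Fin.exists_fin_two, Matrix.cons_val_zero,
          Matrix.cons_val_one, Matrix.head_cons, Set.mem_insert_iff, Set.mem_singleton_iff]
        tauto
      rw [hsp, ← hrange, finrank_span_eq_card hli]
      simp
    · -- all nonzero vectors simplex
      intro v hv hvne
      rw [hsp] at hv
      obtain ⟨a, b, hab⟩ := Submodule.mem_span_pair.mp hv
      by_cases hb : b = 0
      · subst hb
        rw [zero_smul, add_zero] at hab
        have ha : a ≠ 0 := by
          rintro rfl
          rw [zero_smul] at hab
          exact hvne hab.symm
        rw [← hab]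
        exact simplexVec_smul hx ha
      · have hw : v = b • ((b⁻¹ * a) • x + y) := by
          rw [← hab, smul_add, smul_smul, mul_inv_cancel_left₀ hb]
        have hwsimp : SimplexVec ((b⁻¹ * a) • x + y) := by
          obtain ⟨j₀, hj₀, huniq⟩ := hexu (b⁻¹ * a)
          have hj₀i : j₀ ≠ i := (Finset.mem_erase.mp hj₀.1).1
          have hj₀z : ((b⁻¹ * a) • x + y) j₀ = 0 := (key (b⁻¹ * a) j₀ hj₀i).mpr hj₀.2
          unfold SimplexVec
          rw [Finset.card_eq_one]
          refine ⟨j₀, ?_⟩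
          ext j
          simp only [Finset.mem_filter, Finset.mem_univ, true_and, Finset.mem_singleton]
          constructor
          · intro h0
            have hji : j ≠ i := by
              rintro rfl
              have h' : ((b⁻¹ * a) • x + y) j = y j := by simp [hxi]
              rw [h'] at h0
              exact hyi h0
            exact huniq j ⟨Finset.mem_erase.mpr ⟨hji, Finset.mem_univ j⟩,
              (key (b⁻¹ * a) j hji).mp h0⟩
          · intro hj
            rw [hj]
            exact hj₀z
        rw [hw]
        exact simplexVec_smul hwsimp hb
  refine ⟨fun h => (forward h).2, ⟨forward, ?_⟩⟩
  rintro ⟨hyi, hsum⟩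
  exact backward hyi hsum
end

section
/- In V = F_4^5 there are exactly 135 simplex points and exactly 162 simplex lines. -/
section
variable {F : Type*} [Field F] [Fintype F] [DecidableEq F]


lemma simplexVec_iff {n : ℕ} (x : Fin n → F) :
    SimplexVec x ↔ ∃ i, ∀ j, x j = 0 ↔ j = i := by
  rw [SimplexVec, Finset.card_eq_one]
  constructor
  · rintro ⟨i, hi⟩
    exact ⟨i, fun j => by
      constructor
      · intro h
        have : j ∈ Finset.univ.filter (fun k => x k = 0) := by simp [h]
        rwa [hi, Finset.mem_singleton] at this
      · rintro rfl
        have : j ∈ ({j} : Finset (Fin n)) := Finset.mem_singleton_self j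
        rw [← hi, Finset.mem_filter] at this
        exact this.2⟩
  · rintro ⟨i, hi⟩
    exact ⟨i, by ext j; simp [hi j]⟩

/-- normalization index -/
def nidx (i : Fin 5) : Fin 5 := if i = 0 then 1 else 0

lemma nidx_ne (i : Fin 5) : nidx i ≠ i := by fin_cases i <;> decide

/-- fiber predicate: zero exactly at `i`, normalized at `nidx i` -/
def Fib (i : Fin 5) (x : Fin 5 → F) : Prop :=
  x i = 0 ∧ x (nidx i) = 1 ∧ ∀ j, j ≠ i → j ≠ nidx i → x j ≠ 0

lemma Fib.zero_iff {i : Fin 5} {x : Fin 5 → F} (h : Fib i x) :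
    ∀ j, x j = 0 ↔ j = i := by
  intro j
  constructor
  · intro hj
    by_contra hji
    by_cases hjn : j = nidx i
    · rw [hjn, h.2.1] at hj; exact one_ne_zero hj
    · exact h.2.2 j hji hjn hj
  · rintro rfl; exact h.1

lemma Fib.simplex {i : Fin 5} {x : Fin 5 → F} (h : Fib i x) : SimplexVec x :=
  (simplexVec_iff x).2 ⟨i, h.zero_iff⟩

lemma Fib.ne_zero {i : Fin 5} {x : Fin 5 → F} (h : Fib i x) : x ≠ 0 := by
  intro h0
  have := h.2.1
  rw [h0] at this
  exact zero_ne_one (α := F) (by simpa using this)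

lemma pointEquiv :
    Nat.card {P : Submodule F (Fin 5 → F) // SimplexPoint P}
      = Nat.card {x : Fin 5 → F // ∃ i, Fib i x} := by
  refine (Nat.card_congr (Equiv.ofBijective
    (fun x : {x : Fin 5 → F // ∃ i, Fib i x} =>
      (⟨Submodule.span F {x.1}, x.1, (x.2.choose_spec).simplex, rfl⟩ :
        {P : Submodule F (Fin 5 → F) // SimplexPoint P})) ⟨?_, ?_⟩)).symm
  · rintro ⟨x, i, hx⟩ ⟨y, i', hy⟩ h
    simp only [Subtype.mk.injEq] at h ⊢
    -- y ∈ span {x}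
    have hy_mem : y ∈ Submodule.span F {x} := by
      have h' : Submodule.span F {x} = Submodule.span F {y} := congrArg Subtype.val h
      rw [h']; exact Submodule.mem_span_singleton_self y
    obtain ⟨c, hc⟩ := Submodule.mem_span_singleton.1 hy_mem
    have hc0 : c ≠ 0 := by
      rintro rfl
      rw [zero_smul] at hc
      exact hy.ne_zero hc.symm
    -- i = i'
    have hii : i = i' := by
      have : y i = 0 := by rw [← hc]; simp [hx.1]
      exact (hy.zero_iff i).1 this
    subst hii
    have h1 : y (nidx i) = c * x (nidx i) := by rw [← hc]; simp
    rw [hy.2.1, hx.2.1, mul_one] at h1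
    rw [← hc, ← h1, one_smul]
  · rintro ⟨P, v, hv, rfl⟩
    obtain ⟨i, hi⟩ := (simplexVec_iff v).1 hv
    have hni : v (nidx i) ≠ 0 := fun h => nidx_ne i ((hi _).1 h)
    refine ⟨⟨(v (nidx i))⁻¹ • v, i, ?_, ?_, ?_⟩, ?_⟩
    · simp [(hi i).2 rfl]
    · simp [inv_mul_cancel₀ hni]
    · intro j hji _
      simp only [Pi.smul_apply, smul_eq_mul]
      exact mul_ne_zero (inv_ne_zero hni) (fun h => hji ((hi j).1 h))
    · simp only [Subtype.mk.injEq]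
      exact Subtype.ext (Submodule.span_singleton_smul_eq (IsUnit.mk0 _ (inv_ne_zero hni)) v)

instance (i : Fin 5) : DecidablePred (Fib i (F := F)) := fun x => by
  unfold Fib; infer_instance

def QQ (i j : Fin 5) (a : F) : Prop :=
  if j = i then a = 0 else if j = nidx i then a = 1 else a ≠ 0

instance (i j : Fin 5) : DecidablePred (QQ i j (F := F)) := fun a => by
  unfold QQ; infer_instance

lemma fib_iff_QQ (i : Fin 5) (x : Fin 5 → F) : Fib i x ↔ ∀ j, QQ i j (x j) := by
  constructor
  · intro h j
    unfold QQ
    split_ifs with h1 h2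
    · subst h1; exact h.1
    · subst h2; exact h.2.1
    · exact h.2.2 j h1 h2
  · intro h
    refine ⟨?_, ?_, ?_⟩
    · have := h i; unfold QQ at this; simpa using this
    · have := h (nidx i); unfold QQ at this
      rw [if_neg (nidx_ne i), if_pos rfl] at this; exact this
    · intro j hji hjn
      have := h j; unfold QQ at this
      rwa [if_neg hji, if_neg hjn] at this

lemma card_QQ (hF : Fintype.card F = 4) (i j : Fin 5) :
    Fintype.card {a : F // QQ i j a} =
      if j = i then 1 else if j = nidx i then 1 else 3 := by
  unfold QQ
  split_ifs with h1 h2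
  · simp [Fintype.card_subtype_eq]
  · simp [Fintype.card_subtype_eq]
  · have : Fintype.card {a : F // ¬ (a = 0)} = Fintype.card F - Fintype.card {a : F // a = 0} :=
      Fintype.card_subtype_compl _
    rw [Fintype.card_subtype_eq] at this
    simpa [hF] using this

lemma card_fib (hF : Fintype.card F = 4) (i : Fin 5) :
    Fintype.card {x : Fin 5 → F // Fib i x} = 27 := by
  have e : {x : Fin 5 → F // Fib i x} ≃ (∀ j : Fin 5, {a : F // QQ i j a}) :=
    { toFun := fun x j => ⟨x.1 j, (fib_iff_QQ i x.1).1 x.2 j⟩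
      invFun := fun f => ⟨fun j => (f j).1, (fib_iff_QQ i _).2 fun j => (f j).2⟩
      left_inv := fun x => rfl
      right_inv := fun f => rfl }
  rw [Fintype.card_congr e, Fintype.card_pi]
  have : ∀ j, Fintype.card {a : F // QQ i j a} =
      if j = i then 1 else if j = nidx i then 1 else 3 := card_QQ hF i
  rw [Fin.prod_univ_five]
  rw [this 0, this 1, this 2, this 3, this 4]
  fin_cases i <;> simp [nidx] <;> norm_num

lemma points_count (hF : Fintype.card F = 4) :
    Nat.card {P : Submodule F (Fin 5 → F) // SimplexPoint P} = 135 := by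
  rw [pointEquiv]
  have e : {x : Fin 5 → F // ∃ i, Fib i x} ≃ (Σ i : Fin 5, {x : Fin 5 → F // Fib i x}) := by
    refine (Equiv.ofBijective (fun p => ⟨p.2.1, p.1, p.2.2⟩) ⟨?_, ?_⟩).symm
    · rintro ⟨i, x, hx⟩ ⟨i', x', hx'⟩ h
      simp only [Subtype.mk.injEq] at h
      obtain rfl : x = x' := h
      obtain rfl : i = i' := (hx'.zero_iff i).1 hx.1
      rfl
    · rintro ⟨x, i, hx⟩
      exact ⟨⟨i, x, hx⟩, rfl⟩
  rw [Nat.card_congr e, Nat.card_eq_fintype_card, Fintype.card_sigma]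
  simp [card_fib hF]


lemma simplexVec_iff' {n : ℕ} (x : Fin n → F) :
    SimplexVec x ↔ ∃ i, ∀ j, x j = 0 ↔ j = i := by
  rw [SimplexVec, Finset.card_eq_one]
  constructor
  · rintro ⟨i, hi⟩
    refine ⟨i, fun j => ⟨fun h => ?_, fun h => ?_⟩⟩
    · have : j ∈ Finset.univ.filter (fun k => x k = 0) := by simp [h]
      rwa [hi, Finset.mem_singleton] at this
    · subst h
      have : j ∈ ({j} : Finset (Fin n)) := Finset.mem_singleton_self j
      rw [← hi, Finset.mem_filter] at this
      exact this.2
  · rintro ⟨i, hi⟩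
    exact ⟨i, by ext j; simp [hi j]⟩

def vvec (p : Fin 3 → F) : Fin 5 → F := ![0, 1, p 0, p 1, p 2]
def wvec (r : Fin 3 → F) : Fin 5 → F := ![1, 0, r 0, r 1, r 2]

def lspan (q : (Fin 3 → F) × (Fin 3 → F)) : Submodule F (Fin 5 → F) :=
  Submodule.span F {vvec q.1, wvec q.2}

def Good (q : (Fin 3 → F) × (Fin 3 → F)) : Prop :=
  (∀ j, q.1 j ≠ 0) ∧ (∀ j, q.2 j ≠ 0) ∧
    Function.Injective (fun j => q.1 j * (q.2 j)⁻¹)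

/-- the embedding of Fin 3 into the last three coordinates -/
def emb3 (j : Fin 3) : Fin 5 := ⟨j.1 + 2, by omega⟩

lemma emb3_inj : Function.Injective (emb3) := by decide

lemma comb_eq (s t : F) (p r : Fin 3 → F) :
    s • vvec p + t • wvec r =
      ![t, s, s * p 0 + t * r 0, s * p 1 + t * r 1, s * p 2 + t * r 2] := by
  funext k
  fin_cases k <;> simp [vvec, wvec] <;> ring

lemma comb_apply (s t : F) (p r : Fin 3 → F) (j : Fin 3) :
    (s • vvec p + t • wvec r) (emb3 j) = s * p j + t * r j := by
  rw [comb_eq]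
  fin_cases j <;> rfl

lemma mem_lspan_iff (q : (Fin 3 → F) × (Fin 3 → F)) (x : Fin 5 → F) :
    x ∈ lspan q ↔ ∃ s t : F, x = s • vvec q.1 + t • wvec q.2 := by
  rw [lspan, Submodule.mem_span_pair]
  exact ⟨fun ⟨a, b, h⟩ => ⟨a, b, h.symm⟩, fun ⟨a, b, h⟩ => ⟨a, b, h.symm⟩⟩

lemma li_vw (p r : Fin 3 → F) : LinearIndependent F ![vvec p, wvec r] := by
  rw [linearIndependent_fin2]
  constructor
  · intro h
    have := congrFun h 0
    simp [Matrix.cons_val_one, wvec] at this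
  · intro a h
    have := congrFun h 1
    simp [vvec, wvec] at this

lemma finrank_lspan (q : (Fin 3 → F) × (Fin 3 → F)) :
    Module.finrank F ↥(lspan q) = 2 := by
  have h := finrank_span_eq_card (li_vw q.1 q.2)
  have hr : Set.range ![vvec q.1, wvec q.2] = {vvec q.1, wvec q.2} := by
    simp [Matrix.range_cons, Matrix.range_empty, Set.pair_comm]
  rw [hr] at h
  rw [lspan]; convert h; simp

lemma vvec_mem (q : (Fin 3 → F) × (Fin 3 → F)) : vvec q.1 ∈ lspan q :=
  Submodule.subset_span (Set.mem_insert _ _)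

lemma wvec_mem (q : (Fin 3 → F) × (Fin 3 → F)) : wvec q.2 ∈ lspan q :=
  Submodule.subset_span (Set.mem_insert_of_mem _ rfl)

/-- forward direction: a simplex line span has Good parameters -/
lemma good_of_simplexLine (q : (Fin 3 → F) × (Fin 3 → F))
    (h : SimplexLine (lspan q)) : Good q := by
  obtain ⟨p, r⟩ := q
  have hv : vvec p = (1 : F) • vvec p + (0 : F) • wvec r := by simp
  have hw : wvec r = (0 : F) • vvec p + (1 : F) • wvec r := by simp
  have hvs : SimplexVec (vvec p) := by
    refine h.2 _ (vvec_mem _) ?_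
    intro h0
    have := congrFun h0 1
    simp [vvec] at this
  have hws : SimplexVec (wvec r) := by
    refine h.2 _ (wvec_mem _) ?_
    intro h0
    have := congrFun h0 0
    simp [wvec] at this
  obtain ⟨i, hi⟩ := (simplexVec_iff' _).1 hvs
  obtain ⟨i', hi'⟩ := (simplexVec_iff' _).1 hws
  have hi0 : (0 : Fin 5) = i := (hi 0).1 (by simp [vvec])
  have hi1 : (1 : Fin 5) = i' := (hi' 1).1 (by simp [wvec])
  subst hi0; subst hi1
  have hp : ∀ j, p j ≠ 0 := by
    intro j hj
    have : vvec p (emb3 j) = 0 := by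
      rw [hv, comb_apply]; simp [hj]
    have := (hi _).1 this
    fin_cases j <;> exact absurd this (by decide)
  have hr : ∀ j, r j ≠ 0 := by
    intro j hj
    have : wvec r (emb3 j) = 0 := by
      rw [hw, comb_apply]; simp [hj]
    have := (hi' _).1 this
    fin_cases j <;> exact absurd this (by decide)
  refine ⟨hp, hr, ?_⟩
  intro j k hjk
  have hjk' : p j * (r j)⁻¹ = p k * (r k)⁻¹ := hjk
  by_contra hne
  -- the vector v - (p j / r j) • w has zeros at emb3 j and emb3 k
  have hlam : (p j * (r j)⁻¹ : F) = p j * (r j)⁻¹ := rfl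
  have hx : (1 : F) • vvec p + (-(p j * (r j)⁻¹)) • wvec r ∈ lspan (p, r) :=
    Submodule.add_mem _ (Submodule.smul_mem _ _ (vvec_mem _))
      (Submodule.smul_mem _ _ (wvec_mem _))
  have hx0 : (1 : F) • vvec p + (-(p j * (r j)⁻¹)) • wvec r ≠ 0 := by
    intro h0
    have := congrFun h0 1
    rw [comb_eq] at this
    simp at this
  have hxs := h.2 _ hx hx0
  obtain ⟨i₀, hi₀⟩ := (simplexVec_iff' _).1 hxs
  have hzj : ((1 : F) • vvec p + (-(p j * (r j)⁻¹)) • wvec r) (emb3 j) = 0 := by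
    rw [comb_apply]
    have := hr j
    field_simp
    ring
  have hzk : ((1 : F) • vvec p + (-(p j * (r j)⁻¹)) • wvec r) (emb3 k) = 0 := by
    rw [comb_apply]
    have := hr k
    rw [hjk']
    field_simp
    ring
  have e1 : emb3 j = i₀ := (hi₀ _).1 hzj
  have e2 : emb3 k = i₀ := (hi₀ _).1 hzk
  exact hne (emb3_inj (e1.trans e2.symm))


lemma card_ne_zero (hF : Fintype.card F = 4) : Fintype.card {a : F // a ≠ 0} = 3 := by
  have h : Fintype.card {a : F // ¬ (a = 0)} =
      Fintype.card F - Fintype.card {a : F // a = 0} := Fintype.card_subtype_compl _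
  rw [Fintype.card_subtype_eq] at h
  simpa [hF] using h

lemma vvec_emb3 (p : Fin 3 → F) (j : Fin 3) : vvec p (emb3 j) = p j := by
  fin_cases j <;> rfl

lemma wvec_emb3 (r : Fin 3 → F) (j : Fin 3) : wvec r (emb3 j) = r j := by
  fin_cases j <;> rfl

lemma simplexLine_of_good (hF : Fintype.card F = 4) (q : (Fin 3 → F) × (Fin 3 → F))
    (hq : Good q) : SimplexLine (lspan q) := by
  obtain ⟨p, r⟩ := q
  obtain ⟨hp, hr, hinj⟩ := hq
  refine ⟨finrank_lspan _, ?_⟩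
  intro x hx hx0
  obtain ⟨s, t, rfl⟩ := (mem_lspan_iff _ _).1 hx
  rcases eq_or_ne s 0 with hs | hs
  · rcases eq_or_ne t 0 with ht | ht
    · exact absurd (by rw [hs, ht]; simp) hx0
    · refine (simplexVec_iff' _).2 ⟨1, ?_⟩
      intro k
      rw [comb_eq]
      subst hs
      fin_cases k <;>
        simp [mul_eq_zero, ht, hp 0, hp 1, hp 2, hr 0, hr 1, hr 2]
  · rcases eq_or_ne t 0 with ht | ht
    · refine (simplexVec_iff' _).2 ⟨0, ?_⟩
      intro k
      rw [comb_eq]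
      subst ht
      fin_cases k <;>
        simp [mul_eq_zero, hs, hp 0, hp 1, hp 2, hr 0, hr 1, hr 2]
    · -- both coefficients nonzero
      have hmn : ∀ j, p j * (r j)⁻¹ ≠ 0 :=
        fun j => mul_ne_zero (hp j) (inv_ne_zero (hr j))
      have hbij : Function.Bijective
          (fun j : Fin 3 => (⟨p j * (r j)⁻¹, hmn j⟩ : {a : F // a ≠ 0})) := by
        rw [Fintype.bijective_iff_injective_and_card]
        refine ⟨fun a b hab => hinj (congrArg Subtype.val hab), ?_⟩
        rw [card_ne_zero hF]; rfl
      have htv : (-(t * s⁻¹) : F) ≠ 0 :=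
        neg_ne_zero.2 (mul_ne_zero ht (inv_ne_zero hs))
      obtain ⟨j₀, hj₀⟩ := hbij.2 ⟨-(t * s⁻¹), htv⟩
      have hj₀' : p j₀ * (r j₀)⁻¹ = -(t * s⁻¹) := congrArg Subtype.val hj₀
      have key : ∀ j : Fin 3, (s * p j + t * r j = 0) ↔ j = j₀ := by
        intro j
        constructor
        · intro hzero
          refine hinj ?_
          show p j * (r j)⁻¹ = p j₀ * (r j₀)⁻¹
          rw [hj₀']
          have hrj := hr j
          have h3 : s * p j = -(t * r j) := by linear_combination hzero
          apply mul_left_cancel₀ hs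
          rw [← mul_assoc, h3]
          field_simp
        · intro hj
          subst hj
          have hrj : r j ≠ 0 := hr j
          have h2 : p j = -(t * s⁻¹) * r j := by
            have h4 := congrArg (· * r j) hj₀'
            simpa [mul_assoc, inv_mul_cancel₀ hrj] using h4
          rw [h2]
          field_simp
          ring
      refine (simplexVec_iff' _).2 ⟨emb3 j₀, ?_⟩
      intro k
      rw [comb_eq]
      fin_cases k
      · show t = 0 ↔ (0 : Fin 5) = emb3 j₀
        simp only [ht, false_iff]
        fin_cases j₀ <;> decide
      · show s = 0 ↔ (1 : Fin 5) = emb3 j₀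
        simp only [hs, false_iff]
        fin_cases j₀ <;> decide
      · show s * p 0 + t * r 0 = 0 ↔ (2 : Fin 5) = emb3 j₀
        rw [key 0]
        fin_cases j₀ <;> decide
      · show s * p 1 + t * r 1 = 0 ↔ (3 : Fin 5) = emb3 j₀
        rw [key 1]
        fin_cases j₀ <;> decide
      · show s * p 2 + t * r 2 = 0 ↔ (4 : Fin 5) = emb3 j₀
        rw [key 2]
        fin_cases j₀ <;> decide

lemma exists_zero_coord (L : Submodule F (Fin 5 → F)) (hL : SimplexLine L) (i : Fin 5) :
    ∃ u : Fin 5 → F, u ∈ L ∧ u ≠ 0 ∧ u i = 0 := by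
  let f : L →ₗ[F] F := (LinearMap.proj i).comp L.subtype
  have h1 := LinearMap.finrank_range_add_finrank_ker f
  rw [hL.1] at h1
  have h2 : Module.finrank F ↥(LinearMap.range f) ≤ 1 :=
    le_trans (Submodule.finrank_le _) (le_of_eq (Module.finrank_self F))
  have h3 : LinearMap.ker f ≠ ⊥ := by
    intro hb
    rw [hb, finrank_bot] at h1
    omega
  obtain ⟨z, hz, hz0⟩ := (Submodule.ne_bot_iff _).1 h3
  exact ⟨z.1, z.2, fun h => hz0 (Submodule.coe_eq_zero.1 h), hz⟩

lemma lines_card (hF : Fintype.card F = 4) :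
    Nat.card {L : Submodule F (Fin 5 → F) // SimplexLine L}
      = Nat.card {q : (Fin 3 → F) × (Fin 3 → F) // Good q} := by
  refine (Nat.card_congr (Equiv.ofBijective
    (fun q : {q : (Fin 3 → F) × (Fin 3 → F) // Good q} =>
      (⟨lspan q.1, simplexLine_of_good hF q.1 q.2⟩ :
        {L : Submodule F (Fin 5 → F) // SimplexLine L})) ⟨?_, ?_⟩)).symm
  · rintro ⟨⟨p, r⟩, hq⟩ ⟨⟨p', r'⟩, hq'⟩ h
    simp only [Subtype.mk.injEq] at h ⊢
    -- vvec p ∈ lspan (p', r')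
    have hvm : vvec p ∈ lspan (p', r') := by rw [← h]; exact vvec_mem (p, r)
    have hwm : wvec r ∈ lspan (p', r') := by rw [← h]; exact wvec_mem (p, r)
    obtain ⟨s, t, hst⟩ := (mem_lspan_iff _ _).1 hvm
    obtain ⟨s', t', hst'⟩ := (mem_lspan_iff _ _).1 hwm
    rw [comb_eq] at hst hst'
    have e0 := congrFun hst 0
    have e1 := congrFun hst 1
    simp [vvec] at e0 e1
    -- e0 : 0 = t, e1 : 1 = s
    have f0 := congrFun hst' 0
    have f1 := congrFun hst' 1
    simp [wvec] at f0 f1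
    have hp : p = p' := by
      funext j
      have := congrFun hst (emb3 j)
      rw [vvec_emb3] at this
      rw [this]
      fin_cases j <;> simp [emb3, ← e0, ← e1]
    have hr : r = r' := by
      funext j
      have := congrFun hst' (emb3 j)
      rw [wvec_emb3] at this
      rw [this]
      fin_cases j <;> simp [emb3, ← f0, ← f1]
    rw [hp, hr]
  · rintro ⟨L, hL⟩
    obtain ⟨u, huL, hu0, huz⟩ := exists_zero_coord L hL 0
    obtain ⟨u', hu'L, hu'0, hu'z⟩ := exists_zero_coord L hL 1
    obtain ⟨iu, hiu⟩ := (simplexVec_iff' _).1 (hL.2 u huL hu0)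
    obtain ⟨iu', hiu'⟩ := (simplexVec_iff' _).1 (hL.2 u' hu'L hu'0)
    have hiu0 : (0 : Fin 5) = iu := (hiu 0).1 huz
    have hiu1 : (1 : Fin 5) = iu' := (hiu' 1).1 hu'z
    subst hiu0; subst hiu1
    have hu1 : u 1 ≠ 0 := fun h => absurd ((hiu 1).1 h) (by decide)
    have hu'1 : u' 0 ≠ 0 := fun h => absurd ((hiu' 0).1 h) (by decide)
    set v : Fin 5 → F := (u 1)⁻¹ • u with hv
    set w : Fin 5 → F := (u' 0)⁻¹ • u' with hw
    have hvL : v ∈ L := Submodule.smul_mem _ _ huL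
    have hwL : w ∈ L := Submodule.smul_mem _ _ hu'L
    have hv0 : v 0 = 0 := by simp [hv, huz]
    have hv1 : v 1 = 1 := by simp [hv, inv_mul_cancel₀ hu1]
    have hw0 : w 0 = 1 := by simp [hw, inv_mul_cancel₀ hu'1]
    have hw1 : w 1 = 0 := by simp [hw, hu'z]
    set p : Fin 3 → F := ![v 2, v 3, v 4] with hp
    set r : Fin 3 → F := ![w 2, w 3, w 4] with hr
    have hvv : vvec p = v := by
      funext k
      fin_cases k <;> simp [vvec, hp, hv0, hv1]
    have hww : wvec r = w := by
      funext k
      fin_cases k <;> simp [wvec, hr, hw0, hw1]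
    have hspan : lspan (p, r) = L := by
      apply le_antisymm
      · rw [lspan, Submodule.span_le]
        rintro y hy
        rcases hy with rfl | hy
        · exact hvv ▸ hvL
        · rw [Set.mem_singleton_iff] at hy
          subst hy
          exact hww ▸ hwL
      · intro x hxL
        have hyL : x - x 1 • vvec p - x 0 • wvec r ∈ L :=
          sub_mem (sub_mem hxL (Submodule.smul_mem _ _ (hvv ▸ hvL)))
            (Submodule.smul_mem _ _ (hww ▸ hwL))
        have hy0 : (x - x 1 • vvec p - x 0 • wvec r) 0 = 0 := by
          simp [vvec, wvec, Matrix.vecHead, Matrix.vecTail]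
        have hy1 : (x - x 1 • vvec p - x 0 • wvec r) 1 = 0 := by
          simp [vvec, wvec, Matrix.vecHead, Matrix.vecTail]
        have hzero : x - x 1 • vvec p - x 0 • wvec r = 0 := by
          by_contra hne
          obtain ⟨i, hi⟩ := (simplexVec_iff' _).1 (hL.2 _ hyL hne)
          have e0 := (hi 0).1 hy0
          have e1 := (hi 1).1 hy1
          rw [← e1] at e0
          exact absurd e0 (by decide)
        rw [sub_sub, sub_eq_zero] at hzero
        rw [hzero]
        exact add_mem (Submodule.smul_mem _ _ (vvec_mem (p, r)))
          (Submodule.smul_mem _ _ (wvec_mem (p, r)))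
    exact ⟨⟨(p, r), good_of_simplexLine (p, r) (by rw [hspan]; exact hL)⟩, Subtype.ext hspan⟩

lemma card_good (hF : Fintype.card F = 4) :
    Nat.card {q : (Fin 3 → F) × (Fin 3 → F) // Good q} = 162 := by
  have e : {q : (Fin 3 → F) × (Fin 3 → F) // Good q} ≃
      (Fin 3 → {a : F // a ≠ 0}) × (Fin 3 ↪ {a : F // a ≠ 0}) :=
    { toFun := fun q =>
        (fun j => ⟨q.1.1 j, q.2.1 j⟩,
         ⟨fun j => ⟨q.1.1 j * (q.1.2 j)⁻¹,
            mul_ne_zero (q.2.1 j) (inv_ne_zero (q.2.2.1 j))⟩,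
          fun a b hab => q.2.2.2 (congrArg Subtype.val hab)⟩)
      invFun := fun x =>
        ⟨(fun j => (x.1 j).1, fun j => (x.1 j).1 * ((x.2 j).1)⁻¹),
          fun j => (x.1 j).2,
          fun j => mul_ne_zero (x.1 j).2 (inv_ne_zero (x.2 j).2),
          by
            have hmap : (fun j => (x.1 j).1 * ((x.1 j).1 * ((x.2 j).1)⁻¹)⁻¹)
                = fun j => (x.2 j).1 := by
              funext j
              have h1 := (x.1 j).2
              have h2 := (x.2 j).2
              field_simp
            show Function.Injective
              (fun j => (x.1 j).1 * ((x.1 j).1 * ((x.2 j).1)⁻¹)⁻¹)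
            rw [hmap]
            exact Subtype.val_injective.comp x.2.injective⟩
      left_inv := fun q => by
        apply Subtype.ext
        apply Prod.ext
        · rfl
        · funext j
          have h1 := q.2.1 j
          have h2 := q.2.2.1 j
          show q.1.1 j * (q.1.1 j * (q.1.2 j)⁻¹)⁻¹ = q.1.2 j
          field_simp
      right_inv := fun x => by
        apply Prod.ext
        · rfl
        · apply DFunLike.ext
          intro j
          apply Subtype.ext
          have h1 := (x.1 j).2
          have h2 := (x.2 j).2
          show (x.1 j).1 * ((x.1 j).1 * ((x.2 j).1)⁻¹)⁻¹ = (x.2 j).1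
          field_simp }
  rw [Nat.card_congr e, Nat.card_eq_fintype_card, Fintype.card_prod,
    Fintype.card_embedding_eq, Fintype.card_pi, card_ne_zero hF]
  norm_num [Nat.descFactorial]

end

/-- In `F_4^5` there are exactly 135 simplex points and exactly 162 simplex
lines. -/
theorem simplex_counts_F4 (F : Type*) [Field F] [Fintype F] [DecidableEq F]
    (hF : Fintype.card F = 4) :
    Nat.card {P : Submodule F (Fin 5 → F) // SimplexPoint P} = 135 ∧
    Nat.card {L : Submodule F (Fin 5 → F) // SimplexLine L} = 162 := by
  exact ⟨points_count hF, (lines_card hF).trans (card_good hF)⟩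
end
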